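/- Let S = (D, loc, Supp) be a structuring of (Σ, Ax, Lem), N a node of D, and P = {N_1, N_2} a partitioning of N with N_1 lemma independent, and let D' be the development graph of the vertical split of S with respect to N and P. Then Dom_D(N) = Dom_{D'}(N_2), and consequently Dom_{Roots(D')} = Dom_{Roots(D)}. -/
import Mathlib


open Classical

/-! # Development graphs and structurings

Entities come from a fixed type `E`, partitioned into signature symbols, axioms and
lemmas by a kind function `kind : E → EKind`.  A development graph is a finite acyclic
directed graph whose nodes are triples of sets of entities (local signature, local
axioms, local lemmas) and whose links are global definition links labelled with
signature morphisms `σ : E → E`. -/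

/-- The three kinds of entities: signature symbols, axioms and lemmas. -/
inductive EKind : Type
  | sig
  | ax
  | lem
deriving DecidableEq

/-- A development graph node `N = (sig^N, ax^N, lem^N)`. -/
structure DGNode (E : Type*) where
  sig : Set E
  ax : Set E
  lem : Set E

/-- The local domain `dom^N := sig^N ∪ ax^N ∪ lem^N`. -/
def DGNode.localDom {E : Type*} (N : DGNode E) : Set E := N.sig ∪ N.ax ∪ N.lem

/-- A global definition link `src →mor tgt`. -/
structure DGLink (E : Type*) where
  src : DGNode E
  mor : E → E
  tgt : DGNode E

/-- A development graph: a finite acyclic directed graph of nodes and links. -/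
structure DevGraph (E : Type*) where
  nodes : Set (DGNode E)
  links : Set (DGLink E)
  src_mem : ∀ l ∈ links, l.src ∈ nodes
  tgt_mem : ∀ l ∈ links, l.tgt ∈ nodes
  finite_nodes : nodes.Finite
  finite_links : links.Finite
  acyclic : ∀ N, ¬ Relation.TransGen (fun M K => ∃ l ∈ links, l.src = M ∧ l.tgt = K) N N

namespace DevGraph

variable {E : Type*}

/-- `e ∈ Dom_D(N)`: the domain of a node is the union of its local domain with the
images `σ(Dom_D(M))` over all incoming links `M →σ N`. -/
inductive InDom (D : DevGraph E) : DGNode E → E → Prop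
  | loc {N : DGNode E} {e : E} : N ∈ D.nodes → e ∈ N.localDom → InDom D N e
  | link {l : DGLink E} {e : E} : l ∈ D.links → InDom D l.src e → InDom D l.tgt (l.mor e)

/-- `Dom_D(N)`. -/
def Dom (D : DevGraph E) (N : DGNode E) : Set E := {e | D.InDom N e}

/-- `Dom_D`: the union of `Dom_D(N)` over all nodes. -/
def DomAll (D : DevGraph E) : Set E := ⋃ N ∈ D.nodes, D.Dom N

/-- Root nodes: nodes without outgoing links. -/
def IsRoot (D : DevGraph E) (N : DGNode E) : Prop :=
  N ∈ D.nodes ∧ ∀ l ∈ D.links, l.src ≠ N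

/-- `Dom_{Roots(D)}`. -/
def DomRoots (D : DevGraph E) : Set E := {e | ∃ N, D.IsRoot N ∧ e ∈ D.Dom N}

/-- Global reachability `M →*σ N`: either `M = N` and `σ = id`, or there is a link
`M →σ' K` and `K →*σ'' N` with `σ = σ'' ∘ σ'`. -/
inductive Reaches (D : DevGraph E) : DGNode E → (E → E) → DGNode E → Prop
  | refl (N : DGNode E) : Reaches D N id N
  | step {l : DGLink E} {σ'' : E → E} {N : DGNode E} :
      l ∈ D.links → Reaches D l.tgt σ'' N → Reaches D l.src (σ'' ∘ l.mor) N

/-- `e` is provided in `N` iff `e ∈ Dom_D(N)` and `e ∉ Dom_D(M)` for every link `M →σ N`. -/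
def ProvidedIn (D : DevGraph E) (N : DGNode E) (e : E) : Prop :=
  e ∈ D.Dom N ∧ ∀ l ∈ D.links, l.tgt = N → e ∉ D.Dom l.src

/-- `e` is locally provided in `N` iff it is provided in `N` and `e ∈ dom^N`. -/
def LocallyProvidedIn (D : DevGraph E) (N : DGNode E) (e : E) : Prop :=
  D.ProvidedIn N e ∧ e ∈ N.localDom

/-- `e` is provided by a link `l : M →σ N` iff `e` is provided but not locally provided
in `N` and `σ(e') = e` for some `e' ∈ Dom_D(M)`. -/
def ProvidedByLink (D : DevGraph E) (l : DGLink E) (e : E) : Prop :=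
  l ∈ D.links ∧ D.ProvidedIn l.tgt e ∧ ¬ D.LocallyProvidedIn l.tgt e ∧
    ∃ e' ∈ D.Dom l.src, l.mor e' = e

/-- `e` is exclusively provided by `l` iff no other link provides `e`. -/
def ExclusivelyProvidedBy (D : DevGraph E) (l : DGLink E) (e : E) : Prop :=
  D.ProvidedByLink l e ∧ ∀ l' ∈ D.links, D.ProvidedByLink l' e → l' = l

/-- A location mapping for `D`: surjective, mapping local entities to their node,
and mapping each entity of `Dom_D` to the unique node providing it. -/
structure IsLocationMapping (D : DevGraph E) (loc : E → DGNode E) : Prop where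
  surj : ∀ N ∈ D.nodes, ∃ e ∈ D.DomAll, loc e = N
  local_loc : ∀ N ∈ D.nodes, ∀ e ∈ N.localDom, loc e = N
  provided : ∀ e ∈ D.DomAll, D.ProvidedIn (loc e) e
  unique : ∀ e ∈ D.DomAll, ∀ N, D.ProvidedIn N e → N = loc e

end DevGraph

/-- The relation `⊏` induced by a support mapping `Supp` on lemmas `Lem`:
`Φ ⊏ φ` iff `Φ ∈ Supp φ`, or `Φ ∈ Supp ψ` and `ψ ⊏ φ` for some lemma `ψ`. -/
inductive SuppBelow {E : Type*} (Supp : E → Set E) (Lem : Set E) : E → E → Prop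
  | base {Φ φ : E} : φ ∈ Lem → Φ ∈ Supp φ → SuppBelow Supp Lem Φ φ
  | trans {Φ ψ φ : E} : ψ ∈ Lem → Φ ∈ Supp ψ → SuppBelow Supp Lem ψ φ →
      SuppBelow Supp Lem Φ φ

/-- `Supp` is a support mapping for axioms `Ax` and lemmas `Lem`: each lemma is
supported by axioms and lemmas, and the induced relation `⊏` is well-founded. -/
structure IsSupportMapping {E : Type*} (Supp : E → Set E) (Ax Lem : Set E) : Prop where
  subset : ∀ φ ∈ Lem, Supp φ ⊆ Ax ∪ Lem
  wf : WellFounded (SuppBelow Supp Lem)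

section

variable {E : Type*} (kind : E → EKind)

/-- The global axioms of `N` in `D`. -/
def DevGraph.axiomsOf (D : DevGraph E) (N : DGNode E) : Set E :=
  {e | e ∈ D.Dom N ∧ kind e = EKind.ax}

/-- The global lemmas of `N` in `D`. -/
def DevGraph.lemmasOf (D : DevGraph E) (N : DGNode E) : Set E :=
  {e | e ∈ D.Dom N ∧ kind e = EKind.lem}

/-- The lemmas occurring in `D`. -/
def DevGraph.lemmasAll (D : DevGraph E) : Set E :=
  {e | e ∈ D.DomAll ∧ kind e = EKind.lem}

/-- `Supp` is a support mapping for the development graph `D`: for every node it is a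
support mapping for the global axioms and lemmas of that node. -/
def IsSupportMappingFor (Supp : E → Set E) (D : DevGraph E) : Prop :=
  ∀ N ∈ D.nodes, IsSupportMapping Supp (D.axiomsOf kind N) (D.lemmasOf kind N)

/-- `(D, loc, Supp)` is a structuring of `(Sig, Ax, Lem)`. -/
structure IsStructuring (D : DevGraph E) (loc : E → DGNode E) (Supp : E → Set E)
    (Sig Ax Lem : Set E) : Prop where
  supp_for : IsSupportMappingFor kind Supp D
  loc_map : D.IsLocationMapping loc
  roots_sig : {e | e ∈ D.DomRoots ∧ kind e = EKind.sig} = Sig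
  roots_ax : {e | e ∈ D.DomRoots ∧ kind e = EKind.ax} = Ax
  roots_lem : Lem ⊆ {e | e ∈ D.DomRoots ∧ kind e = EKind.lem}
  supp_reach : ∀ φ ∈ D.lemmasAll kind, ∀ ψ ∈ Supp φ,
    ∃ σ : E → E, D.Reaches (loc ψ) σ (loc φ) ∧ σ ψ = ψ

end

/-- `P = {N_1, …, N_k}`, `k > 1`, is a partitioning of `N`: the local signatures,
axioms and lemmas of the (distinct) `N_i` partition those of `N` as disjoint unions,
and each `N_i` has a nonempty local domain. -/
structure IsPartitioning {E : Type*} (N : DGNode E) {k : ℕ} (Ns : Fin k → DGNode E) :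
    Prop where
  one_lt : 1 < k
  inj : Function.Injective Ns
  sig_eq : N.sig = ⋃ i, (Ns i).sig
  ax_eq : N.ax = ⋃ i, (Ns i).ax
  lem_eq : N.lem = ⋃ i, (Ns i).lem
  sig_disj : ∀ i j, i ≠ j → Disjoint (Ns i).sig (Ns j).sig
  ax_disj : ∀ i j, i ≠ j → Disjoint (Ns i).ax (Ns j).ax
  lem_disj : ∀ i j, i ≠ j → Disjoint (Ns i).lem (Ns j).lem
  nonempty : ∀ i, (Ns i).localDom.Nonempty

/-- `Ni` (a part of a partitioning of `N`) is lemma independent: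
`Supp(ψ) ∩ (ax^N ∪ lem^N) ⊆ ax^{Ni} ∪ lem^{Ni}` for every `ψ ∈ lem^{Ni}`. -/
def LemmaIndependent {E : Type*} (Supp : E → Set E) (N Ni : DGNode E) : Prop :=
  ∀ ψ ∈ Ni.lem, Supp ψ ∩ (N.ax ∪ N.lem) ⊆ Ni.ax ∪ Ni.lem

/-- The restriction `σ|S` of a signature morphism to a set `S` (identity outside `S`). -/
noncomputable def restrictMor {E : Type*} (σ : E → E) (S : Set E) : E → E :=
  fun e => if e ∈ S then σ e else e

/-- `(D', loc')` is the horizontal split of `(D, loc)` with respect to the node `N` and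
the partitioning `N_1, …, N_k`: `N` is replaced by `N_1, …, N_k`, incoming links
`M →θ N` are replaced by `M →θ N_i` for all `i`, outgoing links `N →τ M` by
`N_i →τ|Dom_{D'}(N_i) M` for all `i`, all other links are kept, and `loc'(e) = N_i`
if `e ∈ dom^{N_i}` and `loc'(e) = loc(e)` otherwise. -/
structure IsHorizontalSplit {E : Type*} (D D' : DevGraph E) (N : DGNode E) {k : ℕ}
    (Ns : Fin k → DGNode E) (loc loc' : E → DGNode E) : Prop where
  mem : N ∈ D.nodes
  fresh : ∀ i, Ns i ∉ D.nodes \ {N}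
  nodes' : D'.nodes = Set.range Ns ∪ (D.nodes \ {N})
  links' : D'.links =
    {l | (l ∈ D.links ∧ l.src ≠ N ∧ l.tgt ≠ N)
      ∨ (∃ l0 ∈ D.links, l0.tgt = N ∧ ∃ i, l = ⟨l0.src, l0.mor, Ns i⟩)
      ∨ (∃ l0 ∈ D.links, l0.src = N ∧
          ∃ i, l = ⟨Ns i, restrictMor l0.mor (D'.Dom (Ns i)), l0.tgt⟩)}
  loc'_in : ∀ i, ∀ e ∈ (Ns i).localDom, loc' e = Ns i
  loc'_out : ∀ e, (∀ i, e ∉ (Ns i).localDom) → loc' e = loc e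

/-- `(D', loc')` is the vertical split of `(D, loc)` with respect to the node `N` and
the partitioning `{N_1, N_2}`: `N` is replaced by `N_1` and `N_2` joined by the link
`N_1 →id N_2`, incoming links `M →σ N` are replaced by `M →σ N_1`, outgoing links
`N →σ M` by `N_2 →σ M`, all other links are kept, and `loc'(e) = N_2` if `loc(e) = N`
and `e ∈ Dom_{D'}(N_2)`, `loc'(e) = N_1` if `loc(e) = N` and `e ∉ Dom_{D'}(N_2)`, and
`loc'(e) = loc(e)` otherwise. -/
structure IsVerticalSplit {E : Type*} (D D' : DevGraph E) (N N1 N2 : DGNode E)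
    (loc loc' : E → DGNode E) : Prop where
  mem : N ∈ D.nodes
  fresh1 : N1 ∉ D.nodes \ {N}
  fresh2 : N2 ∉ D.nodes \ {N}
  nodes' : D'.nodes = {N1, N2} ∪ (D.nodes \ {N})
  links' : D'.links =
    {l | (l ∈ D.links ∧ l.src ≠ N ∧ l.tgt ≠ N)
      ∨ l = ⟨N1, id, N2⟩
      ∨ (∃ l0 ∈ D.links, l0.tgt = N ∧ l = ⟨l0.src, l0.mor, N1⟩)
      ∨ (∃ l0 ∈ D.links, l0.src = N ∧ l = ⟨N2, l0.mor, l0.tgt⟩)}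
  loc'_N2 : ∀ e, loc e = N → e ∈ D'.Dom N2 → loc' e = N2
  loc'_N1 : ∀ e, loc e = N → e ∉ D'.Dom N2 → loc' e = N1
  loc'_other : ∀ e, loc e ≠ N → loc' e = loc e

/-- `(D', loc', Supp ∪ SuppN)` is the factorization of `(D, loc, Supp)` with respect to
the nodes `M_1, …, M_p` (imported via links `K_i →σ_{i,j} M_j` from `K_1, …, K_n`),
the fresh sets `sigN, axN, lemN`, the morphisms `θ_j` and `σ_i`, and the support
mapping `SuppN`; it includes all side conditions of the factorization rule. -/
structure IsFactorization {E : Type*} (kind : E → EKind) (D D' : DevGraph E)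
    (loc loc' : E → DGNode E) (Supp SuppN : E → Set E)
    {n p : ℕ} (Ks : Fin n → DGNode E) (Ms : Fin p → DGNode E)
    (σij : Fin n → Fin p → E → E)
    (sigN axN lemN : Set E) (θ : Fin p → E → E) (σ : Fin n → E → E)
    (N : DGNode E) (Nj : Fin p → DGNode E) : Prop where
  one_lt : 1 < p
  Ks_mem : ∀ i, Ks i ∈ D.nodes
  Ms_mem : ∀ j, Ms j ∈ D.nodes
  Ms_inj : Function.Injective Ms
  Ms_nonempty : ∀ j, ((Ms j).sig ∪ (Ms j).ax).Nonempty
  links_ij : ∀ i j, (⟨Ks i, σij i j, Ms j⟩ : DGLink E) ∈ D.links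
  fresh : (sigN ∪ axN ∪ lemN) ∩ D.DomAll = ∅
  kind_sig : ∀ e ∈ sigN, kind e = EKind.sig
  kind_ax : ∀ e ∈ axN, kind e = EKind.ax
  kind_lem : ∀ e ∈ lemN, kind e = EKind.lem
  mor_compat : ∀ i j, ∀ e ∈ D.Dom (Ks i), θ j (σ i e) = σij i j e
  mor_fresh : ∀ i j, ∀ e ∈ D.Dom (Ks i), σij i j e = e ∨ σij i j e ∉ D.DomAll
  sig_sub : ∀ j, (Ms j).sig ⊆ θ j '' sigN ∧ θ j '' sigN ⊆ D.Dom (Ms j)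
  ax_sub : ∀ j, (Ms j).ax ⊆ θ j '' axN ∧ θ j '' axN ⊆ D.Dom (Ms j)
  lem_wit : ∀ e ∈ lemN, ∃ l, θ l e ∈ (Ms l).lem
  lem_inj : ∀ e ∈ lemN, ∀ i j, θ i e = θ j e → i = j
  lem_loc : ∀ e ∈ lemN, ∀ j, θ j e ∈ D.DomAll → loc (θ j e) = Ms j
  suppN : IsSupportMapping SuppN (axN ∪ ⋃ i, σ i '' D.Dom (Ks i)) lemN
  N_def : N = ⟨sigN, axN, lemN⟩
  Nj_def : ∀ j, Nj j = ⟨∅, ∅, (Ms j).lem \ θ j '' lemN⟩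
  nodes' : D'.nodes = {N} ∪ Set.range Nj ∪ (D.nodes \ Set.range Ms)
  links' : D'.links =
    {l | (l ∈ D.links ∧ l.src ∉ Set.range Ms ∧ l.tgt ∉ Set.range Ms)
      ∨ (∃ i, l = ⟨Ks i, σ i, N⟩)
      ∨ (∃ j, l = ⟨N, θ j, Nj j⟩)
      ∨ (∃ l0 ∈ D.links, ∃ j, l0.tgt = Ms j ∧
          (∀ i, l0.src ≠ Ks i ∨ l0.mor ≠ σij i j) ∧ l = ⟨l0.src, l0.mor, Nj j⟩)
      ∨ (∃ l0 ∈ D.links, ∃ j, l0.src = Ms j ∧ l = ⟨Nj j, l0.mor, l0.tgt⟩)}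
  loc'_N : ∀ x, x ∈ D'.Dom N → (∀ i, x ∉ D'.Dom (Ks i)) → loc' x = N
  loc'_Nj : ∀ x j, ¬ (x ∈ D'.Dom N ∧ ∀ i, x ∉ D'.Dom (Ks i)) →
      x ∈ D'.Dom (Nj j) → (∀ l ∈ D'.links, l.tgt = Nj j → x ∉ D'.Dom l.src) →
      loc' x = Nj j
  loc'_other : ∀ x, ¬ (x ∈ D'.Dom N ∧ ∀ i, x ∉ D'.Dom (Ks i)) →
      (∀ j, ¬ (x ∈ D'.Dom (Nj j) ∧ ∀ l ∈ D'.links, l.tgt = Nj j → x ∉ D'.Dom l.src)) →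
      loc' x = loc x

/-- The link `l` is removable from the structuring `(D, loc, Supp)`, and
`D' = ⟨N, L \ {l}⟩` is the corresponding reduction. -/
structure IsRemovableLink {E : Type*} (kind : E → EKind) (D D' : DevGraph E)
    (loc : E → DGNode E) (Supp : E → Set E) (l : DGLink E) : Prop where
  mem : l ∈ D.links
  nodes' : D'.nodes = D.nodes
  links' : D'.links = D.links \ {l}
  cond1 : ∀ l' ∈ D.links, ∀ e ∈ D.Dom l'.src, D.ExclusivelyProvidedBy l' (l'.mor e) →
      l'.mor e ∈ D'.Dom l'.tgt ∧ l ≠ l'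
  cond2 : ∀ e ∈ D.DomAll, ∀ M, D.IsRoot M → ∀ σ : E → E, D.Reaches (loc e) σ M →
      ∃ M', D'.IsRoot M' ∧ D'.Reaches (loc e) σ M'
  cond3_supp : ∀ φ ∈ D.lemmasAll kind, Supp φ ⊆ D'.Dom (loc φ)
  cond3_sig : ∀ N' ∈ D.nodes, N'.sig ⊆ D'.Dom N'

/-- After a vertical split, `Dom_D(N) = Dom_{D'}(N_2)`, and consequently
the domains of the root nodes are unchanged. -/
theorem vertical_split_dom_roots {E : Type*} (kind : E → EKind)
    (D D' : DevGraph E) (loc loc' : E → DGNode E) (Supp : E → Set E)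
    (Sig Ax Lem : Set E) (N N1 N2 : DGNode E)
    (hS : IsStructuring kind D loc Supp Sig Ax Lem)
    (hP : IsPartitioning N ![N1, N2])
    (hLI : LemmaIndependent Supp N N1)
    (hsplit : IsVerticalSplit D D' N N1 N2 loc loc') :
    D.Dom N = D'.Dom N2 ∧ D'.DomRoots = D.DomRoots := by
  classical
  -- basic consequences of the partitioning
  have hNe12 : N1 ≠ N2 := by
    intro h
    have h01 : (![N1, N2] : Fin 2 → DGNode E) 0 = ![N1, N2] 1 := by simp [h]
    exact absurd (hP.inj h01) (by decide)
  have hsig : N.sig = N1.sig ∪ N2.sig := by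
    rw [hP.sig_eq]; ext x; simp [Fin.exists_fin_two]
  have hax : N.ax = N1.ax ∪ N2.ax := by
    rw [hP.ax_eq]; ext x; simp [Fin.exists_fin_two]
  have hlem : N.lem = N1.lem ∪ N2.lem := by
    rw [hP.lem_eq]; ext x; simp [Fin.exists_fin_two]
  have hsd : Disjoint N1.sig N2.sig := by
    have := hP.sig_disj 0 1 (by decide); simpa using this
  have had : Disjoint N1.ax N2.ax := by
    have := hP.ax_disj 0 1 (by decide); simpa using this
  have hld : Disjoint N1.lem N2.lem := by
    have := hP.lem_disj 0 1 (by decide); simpa using this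
  have empty_of : ∀ {A A1 A2 : Set E}, A = A1 ∪ A2 → Disjoint A1 A2 → A = A1 → A2 = ∅ := by
    intro A A1 A2 hu hd he
    have hsub : A2 ⊆ A1 := by rw [← he, hu]; exact Set.subset_union_right
    ext x
    simp only [Set.mem_empty_iff_false, iff_false]
    exact fun hx => Set.disjoint_left.mp hd (hsub hx) hx
  have empty_of' : ∀ {A A1 A2 : Set E}, A = A1 ∪ A2 → Disjoint A1 A2 → A = A2 → A1 = ∅ := by
    intro A A1 A2 hu hd he
    exact empty_of (by rw [hu, Set.union_comm]) hd.symm he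
  have hNN1 : N ≠ N1 := by
    intro h
    obtain ⟨x, hx⟩ := hP.nonempty 1
    have hx' : x ∈ N2.localDom := by simpa using hx
    rw [DGNode.localDom, empty_of hsig hsd (congrArg DGNode.sig h),
      empty_of hax had (congrArg DGNode.ax h),
      empty_of hlem hld (congrArg DGNode.lem h)] at hx'
    simpa using hx'
  have hNN2 : N ≠ N2 := by
    intro h
    obtain ⟨x, hx⟩ := hP.nonempty 0
    have hx' : x ∈ N1.localDom := by simpa using hx
    rw [DGNode.localDom, empty_of' hsig hsd (congrArg DGNode.sig h),
      empty_of' hax had (congrArg DGNode.ax h),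
      empty_of' hlem hld (congrArg DGNode.lem h)] at hx'
    simpa using hx'
  have hN1nD : N1 ∉ D.nodes := fun h =>
    hsplit.fresh1 (Set.mem_diff_singleton.mpr ⟨h, hNN1.symm⟩)
  have hN2nD : N2 ∉ D.nodes := fun h =>
    hsplit.fresh2 (Set.mem_diff_singleton.mpr ⟨h, hNN2.symm⟩)
  have hN1mem : N1 ∈ D'.nodes := by rw [hsplit.nodes']; left; left; rfl
  have hN2mem : N2 ∈ D'.nodes := by rw [hsplit.nodes']; left; right; rfl
  have hlink12 : (⟨N1, id, N2⟩ : DGLink E) ∈ D'.links := by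
    rw [hsplit.links']; exact Or.inr (Or.inl rfl)
  have noloop : ∀ l ∈ D.links, l.src ≠ l.tgt := fun l hl h =>
    D.acyclic l.tgt (Relation.TransGen.single ⟨l, hl, h, rfl⟩)
  have hloc : N.localDom = N1.localDom ∪ N2.localDom := by
    simp only [DGNode.localDom, hsig, hax, hlem]
    ext x
    simp only [Set.mem_union]
    tauto
  have hsub1 : N1.localDom ⊆ N.localDom := hloc ▸ Set.subset_union_left
  have hsub2 : N2.localDom ⊆ N.localDom := hloc ▸ Set.subset_union_right
  -- forward direction
  have fwd : ∀ M e, D.InDom M e →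
      (M = N → e ∈ D'.Dom N2) ∧ (M ≠ N → e ∈ D'.Dom M) := by
    intro M e h
    induction h with
    | @loc M e hM he =>
      constructor
      · rintro rfl
        have he' : e ∈ N1.localDom ∪ N2.localDom := hloc ▸ he
        rcases he' with h1 | h2
        · exact DevGraph.InDom.link (l := ⟨N1, id, N2⟩) hlink12
            (DevGraph.InDom.loc hN1mem h1)
        · exact DevGraph.InDom.loc hN2mem h2
      · intro hne
        exact DevGraph.InDom.loc (by rw [hsplit.nodes']; right; exact ⟨hM, hne⟩) he
    | @link l e hl hsrc ih =>
      by_cases htgt : l.tgt = N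
      · have hsrcne : l.src ≠ N := fun h => noloop l hl (h.trans htgt.symm)
        have he' : e ∈ D'.Dom l.src := ih.2 hsrcne
        have h1 : l.mor e ∈ D'.Dom N1 :=
          DevGraph.InDom.link (l := ⟨l.src, l.mor, N1⟩)
            (by rw [hsplit.links']
                exact Or.inr (Or.inr (Or.inl ⟨l, hl, htgt, rfl⟩))) he'
        have h2 : l.mor e ∈ D'.Dom N2 :=
          DevGraph.InDom.link (l := ⟨N1, id, N2⟩) hlink12 h1
        exact ⟨fun _ => h2, fun hne => absurd htgt hne⟩
      · by_cases hsrc' : l.src = N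
        · have he' : e ∈ D'.Dom N2 := ih.1 hsrc'
          have h2 : l.mor e ∈ D'.Dom l.tgt :=
            DevGraph.InDom.link (l := ⟨N2, l.mor, l.tgt⟩)
              (by rw [hsplit.links']
                  exact Or.inr (Or.inr (Or.inr ⟨l, hl, hsrc', rfl⟩))) he'
          exact ⟨fun h => absurd h htgt, fun _ => h2⟩
        · have he' := ih.2 hsrc'
          have h2 : l.mor e ∈ D'.Dom l.tgt :=
            DevGraph.InDom.link
              (by rw [hsplit.links']; exact Or.inl ⟨hl, hsrc', htgt⟩) he'
          exact ⟨fun h => absurd h htgt, fun _ => h2⟩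
  -- backward direction
  have bwd : ∀ M e, D'.InDom M e →
      ((M = N1 ∨ M = N2) → e ∈ D.Dom N) ∧ (M ≠ N1 → M ≠ N2 → e ∈ D.Dom M) := by
    intro M e h
    induction h with
    | @loc M e hM he =>
      constructor
      · rintro (rfl | rfl)
        · exact DevGraph.InDom.loc hsplit.mem (hsub1 he)
        · exact DevGraph.InDom.loc hsplit.mem (hsub2 he)
      · intro h1 h2
        have hM' : M ∈ D.nodes := by
          rw [hsplit.nodes'] at hM
          rcases hM with (rfl | rfl) | hM
          · exact absurd rfl h1
          · exact absurd rfl h2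
          · exact hM.1
        exact DevGraph.InDom.loc hM' he
    | @link l e hl hsrc ih =>
      rw [hsplit.links'] at hl
      rcases hl with ⟨hl, hs, ht⟩ | rfl | ⟨l0, hl0, ht0, rfl⟩ | ⟨l0, hl0, hs0, rfl⟩
      · have hs1 : l.src ≠ N1 := fun h => hN1nD (h ▸ D.src_mem l hl)
        have hs2 : l.src ≠ N2 := fun h => hN2nD (h ▸ D.src_mem l hl)
        have he' : e ∈ D.Dom l.src := ih.2 hs1 hs2
        have h2 : l.mor e ∈ D.Dom l.tgt := DevGraph.InDom.link hl he'
        have ht1 : l.tgt ≠ N1 := fun h => hN1nD (h ▸ D.tgt_mem l hl)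
        have ht2 : l.tgt ≠ N2 := fun h => hN2nD (h ▸ D.tgt_mem l hl)
        exact ⟨fun h => absurd h (by simp [ht1, ht2]), fun _ _ => h2⟩
      · have he' : e ∈ D.Dom N := ih.1 (Or.inl rfl)
        exact ⟨fun _ => he', fun _ h => absurd rfl h⟩
      · have hs1 : l0.src ≠ N1 := fun h => hN1nD (h ▸ D.src_mem l0 hl0)
        have hs2 : l0.src ≠ N2 := fun h => hN2nD (h ▸ D.src_mem l0 hl0)
        have he' : e ∈ D.Dom l0.src := ih.2 hs1 hs2
        have h2 : l0.mor e ∈ D.Dom N := ht0 ▸ DevGraph.InDom.link hl0 he'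
        exact ⟨fun _ => h2, fun h _ => absurd rfl h⟩
      · have he' : e ∈ D.Dom l0.src := hs0 ▸ ih.1 (Or.inr rfl)
        have h2 : l0.mor e ∈ D.Dom l0.tgt := DevGraph.InDom.link hl0 he'
        have ht1 : l0.tgt ≠ N1 := fun h => hN1nD (h ▸ D.tgt_mem l0 hl0)
        have ht2 : l0.tgt ≠ N2 := fun h => hN2nD (h ▸ D.tgt_mem l0 hl0)
        exact ⟨fun h => absurd h (by simp [ht1, ht2]), fun _ _ => h2⟩
  have hdomN : D.Dom N = D'.Dom N2 := by
    ext e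
    exact ⟨fun h => (fwd N e h).1 rfl, fun h => (bwd N2 e h).1 (Or.inr rfl)⟩
  refine ⟨hdomN, ?_⟩
  have hdomM : ∀ M, M ∈ D.nodes → M ≠ N → D.Dom M = D'.Dom M := by
    intro M hM hMN
    ext e
    exact ⟨fun h => (fwd M e h).2 hMN,
      fun h => (bwd M e h).2 (fun h' => hN1nD (h' ▸ hM)) (fun h' => hN2nD (h' ▸ hM))⟩
  ext e
  constructor
  · rintro ⟨M, ⟨hMn, hMr⟩, he⟩
    rw [hsplit.nodes'] at hMn
    rcases hMn with (h1 | h2) | ⟨hMD, hMne⟩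
    · exact absurd h1.symm (hMr ⟨N1, id, N2⟩ hlink12)
    · rw [h2] at hMr he
      refine ⟨N, ⟨hsplit.mem, fun l hl hls => ?_⟩, hdomN ▸ he⟩
      exact hMr ⟨N2, l.mor, l.tgt⟩
        (by rw [hsplit.links']; exact Or.inr (Or.inr (Or.inr ⟨l, hl, hls, rfl⟩))) rfl
    · have hMne' : M ≠ N := by simpa using hMne
      refine ⟨M, ⟨hMD, fun l hl hls => ?_⟩, (hdomM M hMD hMne') ▸ he⟩
      by_cases ht : l.tgt = N
      · exact hMr ⟨l.src, l.mor, N1⟩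
          (by rw [hsplit.links']; exact Or.inr (Or.inr (Or.inl ⟨l, hl, ht, rfl⟩)))
          hls
      · exact hMr l (by rw [hsplit.links']; exact Or.inl ⟨hl, hls.trans_ne hMne', ht⟩) hls
  · rintro ⟨M, ⟨hMn, hMr⟩, he⟩
    by_cases hMN : M = N
    · subst hMN
      refine ⟨N2, ⟨hN2mem, fun l hl => ?_⟩, hdomN ▸ he⟩
      rw [hsplit.links'] at hl
      rcases hl with ⟨hl, hs, ht⟩ | rfl | ⟨l0, hl0, ht0, rfl⟩ | ⟨l0, hl0, hs0, rfl⟩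
      · exact fun h => hN2nD (h ▸ D.src_mem l hl)
      · exact hNe12
      · exact fun h => hN2nD (h ▸ D.src_mem l0 hl0)
      · exact absurd hs0 (hMr l0 hl0)
    · refine ⟨M, ⟨by rw [hsplit.nodes']; exact Or.inr ⟨hMn, by simpa using hMN⟩,
        fun l hl => ?_⟩, (hdomM M hMn hMN).symm ▸ he⟩
      rw [hsplit.links'] at hl
      rcases hl with ⟨hl, hs, ht⟩ | rfl | ⟨l0, hl0, ht0, rfl⟩ | ⟨l0, hl0, hs0, rfl⟩
      · exact hMr l hl
      · exact fun h => hN1nD (by rw [show N1 = M from h]; exact hMn)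
      · exact hMr l0 hl0
      · exact fun h => hN2nD (by rw [show N2 = M from h]; exact hMn)
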